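/- (Theorem 4, player C, case ω = 1.) The families (P_C(m, k·i₀))_{m ∈ ℕ} are summable for every k ≥ 0, and the absorption probabilities of player C satisfy: P_C(0) := ∑'_{m} P_C(m, 0) = 1/(2 − φ₂), and for every integer k ≥ 2, P_C(k·i₀) := s·∑'_{m} P_C(m, k·i₀) = 2·i₀·s·φ₂^{k−1}/((1 − s)(2 − φ₂)). -/

import Mathlib

/-- Player C's survival factor: 0 at the absorbing state 0, `1 - s` at the
multiple function barriers `k·i₀` with `k ≥ 2`, and 1 elsewhere (in particular
`cC s i₀ i₀ = 1`). -/
noncomputable def cC (s : ℝ) (i₀ : ℕ) (i : ℕ) : ℝ :=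
  if i = 0 then 0 else if i₀ ∣ i ∧ i ≠ i₀ then 1 - s else 1

section basics
variable {s : ℝ} {i₀ : ℕ}

lemma cC_zero : cC s i₀ 0 = 0 := by simp [cC]

lemma cC_nonneg (hs1 : s ≤ 1) (j : ℕ) : 0 ≤ cC s i₀ j := by
  unfold cC; split_ifs <;> linarith

lemma cC_le_one (hs : 0 ≤ s) (j : ℕ) : cC s i₀ j ≤ 1 := by
  unfold cC; split_ifs <;> linarith

lemma cC_eq_one {j : ℕ} (h0 : j ≠ 0) (h : ¬ (i₀ ∣ j ∧ j ≠ i₀)) : cC s i₀ j = 1 := by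
  unfold cC; rw [if_neg h0, if_neg h]

lemma cC_one (hi₀ : 2 ≤ i₀) : cC s i₀ 1 = 1 := by
  refine cC_eq_one one_ne_zero ?_
  rintro ⟨h, -⟩
  exact absurd (Nat.le_of_dvd one_pos h) (by omega)

lemma cC_i₀ (hi₀ : 2 ≤ i₀) : cC s i₀ i₀ = 1 := by
  refine cC_eq_one (by omega) ?_
  rintro ⟨-, h⟩; exact h rfl

lemma cC_barrier {j : ℕ} (h0 : j ≠ 0) (hd : i₀ ∣ j) (hne : j ≠ i₀) :
    cC s i₀ j = 1 - s := by
  unfold cC; rw [if_neg h0, if_pos ⟨hd, hne⟩]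

lemma cC_pos (hs1 : s < 1) {j : ℕ} (h0 : j ≠ 0) : 0 < cC s i₀ j := by
  unfold cC; rw [if_neg h0]; split_ifs <;> linarith

end basics

noncomputable def epsC (s : ℝ) (i₀ : ℕ) : ℝ := s / (3 * (i₀ : ℝ) ^ 2)

noncomputable def AfC (s : ℝ) : ℝ := (1 - s / 3) / (1 - s / 12)

/-- supersolution profile (before dividing by `cC`) -/
noncomputable def Gf (s : ℝ) (i₀ : ℕ) (j : ℕ) : ℝ :=
  if j ≤ 2 * i₀ then 1 - epsC s i₀ * ((j : ℝ) - (i₀ : ℝ)) ^ 2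
  else AfC s * (1 - epsC s i₀ * ((j : ℝ) - (↑(j / i₀) : ℝ) * (i₀ : ℝ) - (i₀ : ℝ) / 2) ^ 2)

noncomputable def PhiC (s : ℝ) (i₀ : ℕ) (j : ℕ) : ℝ :=
  if j = 0 then 1 else Gf s i₀ j / cC s i₀ j

section Gfacts
variable {s : ℝ} {i₀ : ℕ} (hs : 0 < s) (hs1 : s < 1) (hi₀ : 2 ≤ i₀)
include hs hi₀
set_option linter.unusedSectionVars false

lemma i₀_cast_pos : (0:ℝ) < (i₀:ℝ) := by exact_mod_cast (by omega : 0 < i₀)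

lemma epsC_pos : 0 < epsC s i₀ := by
  have h := i₀_cast_pos (s := s) hs hi₀
  exact div_pos hs (by positivity)

lemma epsC_sq : epsC s i₀ * (i₀:ℝ)^2 = s / 3 := by
  have h := i₀_cast_pos (s := s) hs hi₀
  rw [epsC, div_mul_eq_mul_div, div_eq_div_iff (by positivity) (by norm_num)]
  ring

lemma epsC_le (hs1 : s < 1) : epsC s i₀ ≤ s / 12 := by
  have h4 : (4:ℝ) ≤ (i₀:ℝ)^2 := by
    have : (2:ℝ) ≤ (i₀:ℝ) := by exact_mod_cast hi₀
    nlinarith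
  rw [epsC, div_le_div_iff₀ (by nlinarith) (by norm_num)]
  nlinarith

lemma AfC_le_one (hs1 : s < 1) : AfC s ≤ 1 := by
  rw [AfC, div_le_one (by linarith)]; linarith

lemma AfC_pos (hs1 : s < 1) : 0 < AfC s := by
  apply div_pos <;> linarith

lemma Gf_le_one (hs1 : s < 1) (j : ℕ) : Gf s i₀ j ≤ 1 := by
  have he := epsC_pos (s := s) hs hi₀
  rw [Gf]
  split_ifs with h
  · nlinarith [sq_nonneg ((j : ℝ) - (i₀ : ℝ))]
  · have hA := AfC_pos (s := s) hs hi₀ hs1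
    have hA1 := AfC_le_one (s := s) (i₀ := i₀) hs hi₀ hs1
    nlinarith [sq_nonneg ((j : ℝ) - (↑(j / i₀) : ℝ) * (i₀ : ℝ) - (i₀ : ℝ) / 2),
      mul_nonneg (mul_nonneg hA.le he.le) (sq_nonneg ((j : ℝ) - (↑(j / i₀) : ℝ) * (i₀ : ℝ) - (i₀ : ℝ) / 2))]

lemma Gf_ge (hs1 : s < 1) {j : ℕ} (hj : 1 ≤ j) : 1 - s / 3 ≤ Gf s i₀ j := by
  have he := epsC_pos (s := s) hs hi₀
  have hsq := epsC_sq (s := s) hs hi₀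
  have hipos := i₀_cast_pos (s := s) hs hi₀
  rw [Gf]
  split_ifs with h
  · -- (j - i₀)^2 ≤ i₀^2
    have h1 : (j:ℝ) ≤ 2 * (i₀:ℝ) := by exact_mod_cast h
    have h2 : (0:ℝ) ≤ (j:ℝ) := by positivity
    have hb : ((j:ℝ) - (i₀:ℝ))^2 ≤ (i₀:ℝ)^2 := by nlinarith
    nlinarith
  · -- offset² ≤ (i₀/2)²
    set k := j / i₀ with hk
    have hk1 : k * i₀ ≤ j := Nat.div_mul_le_self j i₀
    have hk2 : j < (k + 1) * i₀ := by
      rw [hk, add_mul, one_mul]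
      exact Nat.lt_div_mul_add (by omega)
    have hc1 : ((k:ℝ)) * (i₀:ℝ) ≤ (j:ℝ) := by exact_mod_cast hk1
    have hc2 : (j:ℝ) < ((k:ℝ) + 1) * (i₀:ℝ) := by exact_mod_cast hk2
    have hb : ((j : ℝ) - (k : ℝ) * (i₀ : ℝ) - (i₀ : ℝ) / 2)^2 ≤ ((i₀:ℝ)/2)^2 := by
      nlinarith
    have hb2 : epsC s i₀ * ((j : ℝ) - (k : ℝ) * (i₀ : ℝ) - (i₀ : ℝ) / 2)^2 ≤ s / 12 := by
      have e1 : epsC s i₀ * ((i₀:ℝ)/2)^2 = (epsC s i₀ * (i₀:ℝ)^2) / 4 := by ring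
      have e2 : epsC s i₀ * ((i₀:ℝ)/2)^2 = s / 12 := by rw [e1, hsq]; ring
      nlinarith
    have hA : AfC s * (1 - s/12) = 1 - s/3 := by
      rw [AfC]; exact div_mul_cancel₀ _ (by linarith)
    have hApos := AfC_pos (s := s) (i₀ := i₀) hs hi₀ hs1
    nlinarith
end Gfacts

section Gfacts2
variable {s : ℝ} {i₀ : ℕ} (hs : 0 < s) (hs1 : s < 1) (hi₀ : 2 ≤ i₀)
include hs hs1 hi₀
set_option linter.unusedSectionVars false

lemma Gf_i₀ : Gf s i₀ i₀ = 1 := by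
  rw [Gf, if_pos (by omega)]
  simp

lemma Gf_overlap {k j : ℕ} (hk : 2 ≤ k) (h1 : k * i₀ ≤ j) (h2 : j ≤ (k + 1) * i₀) :
    Gf s i₀ j = AfC s * (1 - epsC s i₀ * ((j : ℝ) - (k : ℝ) * (i₀ : ℝ) - (i₀ : ℝ) / 2) ^ 2) := by
  have hipos : 0 < i₀ := by omega
  have hsq := epsC_sq (s := s) hs hi₀
  have hA : AfC s * (1 - s/12) = 1 - s/3 := by
    rw [AfC]; exact div_mul_cancel₀ _ (by linarith)
  rcases eq_or_lt_of_le h1 with he | hlt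
  · -- j = k * i₀
    subst he
    rcases Nat.eq_or_lt_of_le hk with hk2 | hk3
    · -- k = 2 : first branch
      rw [Gf, if_pos (by subst hk2; omega)]
      have hc : ((k * i₀ : ℕ) : ℝ) = (k:ℝ) * (i₀:ℝ) := by push_cast; ring
      rw [hc, ← hk2]
      have : ((2:ℕ):ℝ) = (2:ℝ) := by norm_num
      rw [this]
      have hoff : ((2:ℝ) * (i₀:ℝ) - (2:ℝ) * (i₀:ℝ) - (i₀:ℝ)/2)^2 = (i₀:ℝ)^2/4 := by ring
      have hoff2 : ((2:ℝ) * (i₀:ℝ) - (i₀:ℝ))^2 = (i₀:ℝ)^2 := by ring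
      rw [hoff, hoff2]
      have e1 : epsC s i₀ * ((i₀:ℝ)^2/4) = s/12 := by
        have : epsC s i₀ * ((i₀:ℝ)^2/4) = (epsC s i₀ * (i₀:ℝ)^2)/4 := by ring
        rw [this, hsq]; ring
      rw [hsq, e1, hA]
    · -- k ≥ 3: second branch, j / i₀ = k
      have hgt : ¬ (k * i₀ ≤ 2 * i₀) := by
        intro hcon
        have := Nat.le_of_mul_le_mul_right (by omega : k * i₀ ≤ 2 * i₀) hipos
        omega
      rw [Gf, if_neg (by omega)]
      have hdiv : k * i₀ / i₀ = k := Nat.mul_div_cancel k hipos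
      rw [hdiv]
  · rcases eq_or_lt_of_le h2 with he | hlt2
    · -- j = (k+1) * i₀ : value from floor k+1 equals formula with k
      subst he
      have hgt : ¬ ((k+1) * i₀ ≤ 2 * i₀) := by
        intro hcon
        have := Nat.le_of_mul_le_mul_right (by omega : (k+1) * i₀ ≤ 2 * i₀) hipos
        omega
      rw [Gf, if_neg hgt]
      have hdiv : (k+1) * i₀ / i₀ = k + 1 := Nat.mul_div_cancel (k+1) hipos
      rw [hdiv]
      have hc : (((k+1) * i₀ : ℕ) : ℝ) = ((k:ℝ)+1) * (i₀:ℝ) := by push_cast; ring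
      have hc2 : ((k+1 : ℕ) : ℝ) = (k:ℝ)+1 := by push_cast; ring
      rw [hc, hc2]
      congr 2
      ring_nf
    · -- strictly inside: j / i₀ = k, second branch
      have hdiv : j / i₀ = k := by
        apply Nat.div_eq_of_lt_le
        · omega
        · omega
      have hgt : ¬ (j ≤ 2 * i₀) := by
        have : 2 * i₀ ≤ k * i₀ := Nat.mul_le_mul_right _ hk
        omega
      rw [Gf, if_neg hgt, hdiv]

lemma Gf_quad_first {j : ℕ} (h : j + 2 ≤ 2 * i₀) :
    Gf s i₀ j + Gf s i₀ (j + 2) = 2 * Gf s i₀ (j+1) - 2 * epsC s i₀ := by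
  rw [Gf, Gf, Gf, if_pos (by omega), if_pos (by omega), if_pos (by omega)]
  push_cast
  ring

end Gfacts2

section Phifacts
variable {s : ℝ} {i₀ : ℕ} (hs : 0 < s) (hs1 : s < 1) (hi₀ : 2 ≤ i₀)
include hs hs1 hi₀
set_option linter.unusedSectionVars false

lemma PhiC_pos (j : ℕ) : 0 < PhiC s i₀ j := by
  rw [PhiC]
  split_ifs with h
  · norm_num
  · apply div_pos
    · have := Gf_ge (s := s) hs hi₀ hs1 (Nat.one_le_iff_ne_zero.mpr h)
      linarith
    · exact cC_pos hs1 h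

lemma PhiC_le (j : ℕ) : PhiC s i₀ j ≤ 1 / (1 - s) := by
  rw [PhiC]
  split_ifs with h
  · rw [le_div_iff₀ (by linarith)]; linarith
  · have hG1 := Gf_le_one (s := s) hs hi₀ hs1 j
    have hc : 1 - s ≤ cC s i₀ j := by
      rw [cC, if_neg h]; split_ifs <;> linarith
    have hcpos : 0 < cC s i₀ j := cC_pos hs1 h
    rw [div_le_div_iff₀ hcpos (by linarith)]
    nlinarith

lemma cC_mul_PhiC (j : ℕ) :
    cC s i₀ j * PhiC s i₀ j = if j = 0 then 0 else Gf s i₀ j := by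
  split_ifs with h
  · subst h; rw [cC_zero]; ring
  · rw [PhiC, if_neg h, mul_div_cancel₀ _ (ne_of_gt (cC_pos hs1 h))]

lemma PhiC_i₀ : PhiC s i₀ i₀ = 1 := by
  rw [PhiC, if_neg (by omega), Gf_i₀ hs hs1 hi₀, cC_i₀ hi₀]
  norm_num

omit hs hs1 hi₀ in
lemma quadstep (A e X : ℝ) (hA : 0 < A) :
    1/2*(A*(1-e*X^2)) + 1/2*(A*(1-e*(X+2)^2)) ≤ (1-e)*(A*(1-e*(X+1)^2)) := by
  nlinarith [mul_nonneg (mul_nonneg hA.le (sq_nonneg e)) (sq_nonneg (X+1))]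

/-- The key supersolution inequality. -/
lemma step_ineq (j : ℕ) :
    1/2 * cC s i₀ j * PhiC s i₀ j + 1/2 * cC s i₀ (j+2) * PhiC s i₀ (j+2) ≤
      (1 - epsC s i₀) * PhiC s i₀ (j+1) := by
  have heps := epsC_pos (s := s) hs hi₀
  have hepsle := epsC_le (s := s) hs hi₀ hs1
  have hle1 := Gf_le_one (s := s) hs hi₀ hs1
  have hge : ∀ n : ℕ, 1 ≤ n → 1 - s/3 ≤ Gf s i₀ n := fun n hn => Gf_ge hs hi₀ hs1 hn
  have hcP : ∀ n : ℕ, n ≠ 0 → cC s i₀ n * PhiC s i₀ n = Gf s i₀ n := by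
    intro n hn; rw [cC_mul_PhiC hs hs1 hi₀ n, if_neg hn]
  have hrw : ∀ n : ℕ, 1/2 * cC s i₀ n * PhiC s i₀ n = 1/2 * (cC s i₀ n * PhiC s i₀ n) := by
    intro n; ring
  rcases Nat.eq_zero_or_pos j with rfl | hj
  · -- J = 1
    rw [hrw, hrw, cC_mul_PhiC hs hs1 hi₀ 0, if_pos rfl, hcP 2 (by omega)]
    have hP1 : PhiC s i₀ 1 = Gf s i₀ 1 := by
      rw [PhiC, if_neg one_ne_zero, cC_one hi₀, div_one]
    rw [hP1]
    have h1 := hge 1 le_rfl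
    have h2 := hle1 2
    nlinarith
  · rw [hrw, hrw, hcP j (by omega), hcP (j+2) (by omega)]
    set J := j + 1 with hJ
    by_cases hb : i₀ ∣ J ∧ J ≠ i₀
    · -- barrier case
      have hJ2 : 2 * i₀ ≤ J := by
        obtain ⟨c, hc⟩ := hb.1
        have : c ≠ 0 := by rintro rfl; omega
        have : c ≠ 1 := by rintro rfl; simp at hc; exact hb.2 hc
        have h2c : 2 ≤ c := by omega
        calc 2 * i₀ = i₀ * 2 := by ring
          _ ≤ i₀ * c := Nat.mul_le_mul_left _ h2c
          _ = J := hc.symm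
      have hPJ : PhiC s i₀ J = Gf s i₀ J / (1 - s) := by
        rw [PhiC, if_neg (by omega), cC_barrier (by omega) hb.1 hb.2]
      rw [hPJ]
      have key : (1 - s) * 1 ≤ (1 - epsC s i₀) * Gf s i₀ J := by
        have := hge J (by omega)
        nlinarith
      have h1 := hle1 j
      have h2 := hle1 (j+2)
      rw [mul_div_assoc']
      rw [le_div_iff₀ (by linarith)]
      nlinarith
    · -- non-barrier
      have hJ0 : J ≠ 0 := by omega
      have hPJ : PhiC s i₀ J = Gf s i₀ J := by
        rw [PhiC, if_neg hJ0, cC_eq_one hJ0 hb, div_one]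
      rw [hPJ]
      by_cases hfirst : j + 2 ≤ 2 * i₀
      · have hq := Gf_quad_first (s := s) hs hs1 hi₀ hfirst
        have hGJ := hle1 (j+1)
        nlinarith
      · -- J > 2i₀
        have hipos : 0 < i₀ := by omega
        have hJgt : 2 * i₀ < J := by
          rcases Nat.lt_or_ge (2*i₀) J with h | h
          · exact h
          · -- J ≤ 2i₀ and J+1 > 2i₀ so J = 2i₀, barrier: contradiction
            have : J = 2 * i₀ := by omega
            exfalso; apply hb
            constructor
            · rw [this]; exact dvd_mul_left i₀ 2
            · omega
        set k := J / i₀ with hk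
        have hk2 : 2 ≤ k := by
          rw [hk, Nat.le_div_iff_mul_le hipos]; omega
        have hk1 : k * i₀ ≤ J := Nat.div_mul_le_self J i₀
        have hkJ : J < (k + 1) * i₀ := by
          rw [hk, add_mul, one_mul]; exact Nat.lt_div_mul_add hipos
        have hne : J ≠ k * i₀ := by
          intro hcon
          apply hb
          constructor
          · rw [hcon]; exact dvd_mul_left i₀ k
          · omega
        have hja : k * i₀ ≤ j := by omega
        have hjb : j + 2 ≤ (k+1) * i₀ := by omega
        have o1 := Gf_overlap (s := s) hs hs1 hi₀ hk2 hja (by omega)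
        have o2 := Gf_overlap (s := s) hs hs1 hi₀ hk2 (j := j+1) (by omega) (by omega)
        have o3 := Gf_overlap (s := s) hs hs1 hi₀ hk2 (j := j+2) (by omega) hjb
        rw [← hJ] at o2
        rw [o1, o2, o3]
        have hA := AfC_pos (s := s) (i₀ := i₀) hs hi₀ hs1
        have hA1 := AfC_le_one (s := s) (i₀ := i₀) hs hi₀ hs1
        have hc1 : ((j+1 : ℕ) : ℝ) = (j:ℝ) + 1 := by push_cast; ring
        have hc2 : ((j+2 : ℕ) : ℝ) = (j:ℝ) + 2 := by push_cast; ring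
        rw [hJ, hc1, hc2]
        set X := (j:ℝ) - (k:ℝ) * (i₀:ℝ) - (i₀:ℝ)/2 with hX
        have e1 : (j:ℝ) + 1 - (k:ℝ) * (i₀:ℝ) - (i₀:ℝ)/2 = X + 1 := by rw [hX]; ring
        have e2 : (j:ℝ) + 2 - (k:ℝ) * (i₀:ℝ) - (i₀:ℝ)/2 = X + 2 := by rw [hX]; ring
        rw [e1, e2]
        exact quadstep _ _ _ hA

end Phifacts

/-- Player C's arrival probabilities: `PC p s i₀ m j` is the probability that
player C, starting at `i₀`, is at state `j` after `m` steps without absorption. -/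
noncomputable def PC (p s : ℝ) (i₀ : ℕ) : ℕ → ℕ → ℝ
  | 0, j => if j = i₀ then 1 else 0
  | m + 1, 0 => (1 - p) * cC s i₀ 1 * PC p s i₀ m 1
  | m + 1, j + 1 =>
      p * cC s i₀ j * PC p s i₀ m j + (1 - p) * cC s i₀ (j + 2) * PC p s i₀ m (j + 2)

section PCfacts
variable {s : ℝ} {i₀ : ℕ} (hs : 0 < s) (hs1 : s < 1) (hi₀ : 2 ≤ i₀)
include hs hs1 hi₀
set_option linter.unusedSectionVars false

lemma PC_nonneg (m j : ℕ) : 0 ≤ PC (1/2) s i₀ m j := by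
  induction m generalizing j with
  | zero => rw [PC]; split_ifs <;> norm_num
  | succ m ih =>
    match j with
    | 0 =>
      rw [PC]
      have := cC_nonneg (s := s) (i₀ := i₀) hs1.le 1
      have := ih 1
      norm_num
      positivity
    | j + 1 =>
      rw [PC]
      have h1 := cC_nonneg (s := s) (i₀ := i₀) hs1.le j
      have h2 := cC_nonneg (s := s) (i₀ := i₀) hs1.le (j+2)
      have h3 := ih j
      have h4 := ih (j+2)
      norm_num
      positivity

lemma PC_le_Phi (m j : ℕ) :
    PC (1/2) s i₀ m j ≤ PhiC s i₀ j * (1 - epsC s i₀) ^ m := by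
  have heps := epsC_pos (s := s) hs hi₀
  have hepsle := epsC_le (s := s) hs hi₀ hs1
  have hrpos : 0 < 1 - epsC s i₀ := by
    have : epsC s i₀ ≤ s/12 := hepsle
    linarith
  induction m generalizing j with
  | zero =>
    rw [PC, pow_zero, mul_one]
    split_ifs with h
    · subst h; rw [PhiC_i₀ hs hs1 hi₀]
    · exact (PhiC_pos hs hs1 hi₀ j).le
  | succ m ih =>
    have step := step_ineq hs hs1 hi₀
    match j with
    | 0 =>
      rw [PC]
      have h1 := ih 1
      have hc1 : cC s i₀ 1 = 1 := cC_one hi₀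
      have hP0 : PhiC s i₀ 0 = 1 := by rw [PhiC, if_pos rfl]
      have hP1 : PhiC s i₀ 1 = Gf s i₀ 1 := by
        rw [PhiC, if_neg one_ne_zero, hc1, div_one]
      have hG1 : Gf s i₀ 1 ≤ 1 := Gf_le_one hs hi₀ hs1 1
      have hpow : (0:ℝ) ≤ (1 - epsC s i₀)^m := by positivity
      calc (1 - 1/2) * cC s i₀ 1 * PC (1/2) s i₀ m 1
          = 1/2 * PC (1/2) s i₀ m 1 := by rw [hc1]; ring
        _ ≤ 1/2 * (PhiC s i₀ 1 * (1 - epsC s i₀)^m) := by linarith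
        _ ≤ (1 - epsC s i₀) * (1 - epsC s i₀)^m := by
            rw [hP1]
            have : epsC s i₀ ≤ 1/12 := by nlinarith
            nlinarith
        _ = PhiC s i₀ 0 * (1 - epsC s i₀)^(m+1) := by rw [hP0, pow_succ]; ring
    | j + 1 =>
      rw [PC]
      have h1 := ih j
      have h2 := ih (j+2)
      have hc1 := cC_nonneg (s := s) (i₀ := i₀) hs1.le j
      have hc2 := cC_nonneg (s := s) (i₀ := i₀) hs1.le (j+2)
      have hpow : (0:ℝ) ≤ (1 - epsC s i₀)^m := by positivity
      have e1 : (1:ℝ)/2 * cC s i₀ j * PC (1/2) s i₀ m j ≤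
          1/2 * cC s i₀ j * (PhiC s i₀ j * (1 - epsC s i₀)^m) := by
        apply mul_le_mul_of_nonneg_left h1; positivity
      have e2 : (1 - (1:ℝ)/2) * cC s i₀ (j+2) * PC (1/2) s i₀ m (j+2) ≤
          1/2 * cC s i₀ (j+2) * (PhiC s i₀ (j+2) * (1 - epsC s i₀)^m) := by
        have : (1 - (1:ℝ)/2) = 1/2 := by norm_num
        rw [this]
        apply mul_le_mul_of_nonneg_left h2; positivity
      have e3 := step j
      calc 1/2 * cC s i₀ j * PC (1/2) s i₀ m j +
            (1 - 1/2) * cC s i₀ (j+2) * PC (1/2) s i₀ m (j+2)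
          ≤ (1/2 * cC s i₀ j * PhiC s i₀ j + 1/2 * cC s i₀ (j+2) * PhiC s i₀ (j+2)) *
              (1 - epsC s i₀)^m := by rw [add_mul]; nlinarith [e1, e2]
        _ ≤ ((1 - epsC s i₀) * PhiC s i₀ (j+1)) * (1 - epsC s i₀)^m := by
            apply mul_le_mul_of_nonneg_right e3 hpow
        _ = PhiC s i₀ (j+1) * (1 - epsC s i₀)^(m+1) := by rw [pow_succ]; ring

lemma PC_summable (j : ℕ) : Summable (fun m : ℕ => PC (1/2) s i₀ m j) := by
  have heps := epsC_pos (s := s) hs hi₀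
  have hepsle := epsC_le (s := s) hs hi₀ hs1
  apply Summable.of_nonneg_of_le (fun m => PC_nonneg hs hs1 hi₀ m j)
    (fun m => PC_le_Phi hs hs1 hi₀ m j)
  apply Summable.mul_left
  apply summable_geometric_of_lt_one (by nlinarith) (by nlinarith)

end PCfacts

noncomputable def uC (s : ℝ) (i₀ : ℕ) (j : ℕ) : ℝ := ∑' m : ℕ, PC (1/2) s i₀ m j

section ufacts
variable {s : ℝ} {i₀ : ℕ} (hs : 0 < s) (hs1 : s < 1) (hi₀ : 2 ≤ i₀)
include hs hs1 hi₀
set_option linter.unusedSectionVars false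

lemma uC_zero_eq : uC s i₀ 0 = 1/2 * cC s i₀ 1 * uC s i₀ 1 := by
  rw [uC, Summable.tsum_eq_zero_add (PC_summable hs hs1 hi₀ 0)]
  have h0 : PC (1/2) s i₀ 0 0 = 0 := by
    rw [PC]; rw [if_neg (by omega)]
  rw [h0, zero_add]
  have hrec : ∀ m : ℕ, PC (1/2) s i₀ (m+1) 0 =
      ((1 - 1/2) * cC s i₀ 1) * PC (1/2) s i₀ m 1 := by
    intro m; rw [PC]
  simp_rw [hrec]
  rw [tsum_mul_left, uC]
  ring

lemma uC_rec (j : ℕ) : uC s i₀ (j+1) =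
    (if j + 1 = i₀ then (1:ℝ) else 0) +
      (1/2 * cC s i₀ j * uC s i₀ j + 1/2 * cC s i₀ (j+2) * uC s i₀ (j+2)) := by
  rw [uC, Summable.tsum_eq_zero_add (PC_summable hs hs1 hi₀ (j+1))]
  have h0 : PC (1/2) s i₀ 0 (j+1) = (if j + 1 = i₀ then (1:ℝ) else 0) := by rw [PC]
  rw [h0]
  congr 1
  have hrec : ∀ m : ℕ, PC (1/2) s i₀ (m+1) (j+1) =
      (1/2 * cC s i₀ j) * PC (1/2) s i₀ m j
        + ((1 - 1/2) * cC s i₀ (j+2)) * PC (1/2) s i₀ m (j+2) := by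
    intro m; rw [PC]
  simp_rw [hrec]
  rw [Summable.tsum_add ((PC_summable hs hs1 hi₀ j).mul_left _)
    ((PC_summable hs hs1 hi₀ (j+2)).mul_left _), tsum_mul_left, tsum_mul_left, uC, uC]
  ring

lemma uC_nonneg (j : ℕ) : 0 ≤ uC s i₀ j :=
  tsum_nonneg (fun m => PC_nonneg hs hs1 hi₀ m j)

lemma uC_bound (j : ℕ) : uC s i₀ j ≤ 1 / ((1-s) * epsC s i₀) := by
  have heps := epsC_pos (s := s) hs hi₀
  have hepsle := epsC_le (s := s) hs hi₀ hs1
  have hgeo : Summable (fun m : ℕ => PhiC s i₀ j * (1 - epsC s i₀)^m) := by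
    apply Summable.mul_left
    apply summable_geometric_of_lt_one (by nlinarith) (by nlinarith)
  have h1 : uC s i₀ j ≤ ∑' m : ℕ, PhiC s i₀ j * (1 - epsC s i₀)^m :=
    Summable.tsum_le_tsum (fun m => PC_le_Phi hs hs1 hi₀ m j) (PC_summable hs hs1 hi₀ j) hgeo
  have h2 : ∑' m : ℕ, PhiC s i₀ j * (1 - epsC s i₀)^m
      = PhiC s i₀ j * (1 / epsC s i₀) := by
    rw [tsum_mul_left, tsum_geometric_of_lt_one (by nlinarith) (by nlinarith)]
    congr 1
    rw [sub_sub_cancel, one_div]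
  have h3 := PhiC_le hs hs1 hi₀ j
  calc uC s i₀ j ≤ PhiC s i₀ j * (1 / epsC s i₀) := by rw [← h2]; exact h1
    _ ≤ (1/(1-s)) * (1 / epsC s i₀) := by
        apply mul_le_mul_of_nonneg_right h3; positivity
    _ = 1 / ((1-s) * epsC s i₀) := by field_simp

end ufacts

noncomputable def aC (φ : ℝ) : ℝ := 2 / (2 - φ)
noncomputable def CCf (i₀ : ℕ) (φ : ℝ) : ℝ := (i₀ : ℝ) * aC φ / φ

noncomputable def Bfun (i₀ : ℕ) (φ : ℝ) (j : ℕ) : ℝ :=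
  if j ≤ i₀ then (j : ℝ) * aC φ
  else CCf i₀ φ * φ ^ (j / i₀) *
    (((↑(j / i₀) : ℝ) + 1) * (i₀:ℝ) - (j:ℝ) + ((j:ℝ) - (↑(j / i₀) : ℝ) * (i₀:ℝ)) * φ) / (i₀:ℝ)

noncomputable def ubarC (s : ℝ) (i₀ : ℕ) (φ : ℝ) (j : ℕ) : ℝ :=
  if j = 0 then aC φ / 2 else Bfun i₀ φ j / cC s i₀ j

section ubarfacts
variable {s : ℝ} {i₀ : ℕ} {φ : ℝ} (hs : 0 < s) (hs1 : s < 1) (hi₀ : 2 ≤ i₀)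
  (hφ0 : 0 < φ) (hφ1 : φ < 1)
include hs hs1 hi₀ hφ0 hφ1
set_option linter.unusedSectionVars false

lemma aC_pos : 0 < aC φ := by rw [aC]; apply div_pos <;> linarith

lemma CCf_pos : 0 < CCf i₀ φ := by
  rw [CCf]; have := aC_pos (s := s) hs hs1 hi₀ hφ0 hφ1
  have : (0:ℝ) < (i₀:ℝ) := by exact_mod_cast (by omega : 0 < i₀)
  apply div_pos; · positivity
  · exact hφ0

lemma Bfun_overlap {k j : ℕ} (hk : 1 ≤ k) (h1 : k * i₀ ≤ j) (h2 : j ≤ (k + 1) * i₀) :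
    Bfun i₀ φ j = CCf i₀ φ * φ ^ k *
      (((k:ℝ) + 1) * (i₀:ℝ) - (j:ℝ) + ((j:ℝ) - (k:ℝ) * (i₀:ℝ)) * φ) / (i₀:ℝ) := by
  have hipos : 0 < i₀ := by omega
  have hiR : (0:ℝ) < (i₀:ℝ) := by exact_mod_cast hipos
  have hCa : CCf i₀ φ * φ = (i₀:ℝ) * aC φ := by
    rw [CCf, div_mul_cancel₀ _ (ne_of_gt hφ0)]
  by_cases hle : j ≤ i₀
  · -- forces j = i₀ and k = 1
    have hii : i₀ ≤ k * i₀ := by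
      calc i₀ = 1 * i₀ := (one_mul _).symm
        _ ≤ k * i₀ := Nat.mul_le_mul_right _ hk
    have hji : j = i₀ := le_antisymm hle (le_trans hii h1)
    have hk1 : k = 1 := by
      rcases Nat.lt_or_ge k 2 with h | h
      · omega
      · exfalso; have : 2 * i₀ ≤ k * i₀ := Nat.mul_le_mul_right _ h; omega
    subst hji; subst hk1
    rw [Bfun, if_pos le_rfl]
    rw [pow_one]
    have : ((1:ℕ):ℝ) = 1 := by norm_num
    field_simp
    push_cast
    nlinarith [hCa]
  · rcases eq_or_lt_of_le h2 with he | hlt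
    · -- j = (k+1) i₀
      have hj : j = (k+1) * i₀ := he
      rw [Bfun, if_neg hle]
      rw [hj]
      have hdiv : (k+1) * i₀ / i₀ = k + 1 := Nat.mul_div_cancel (k+1) hipos
      rw [hdiv]
      have hc : (((k+1) * i₀ : ℕ) : ℝ) = ((k:ℝ)+1) * (i₀:ℝ) := by push_cast; ring
      have hc2 : ((k+1 : ℕ) : ℝ) = (k:ℝ)+1 := by push_cast; ring
      rw [hc, hc2]
      rw [pow_succ]
      field_simp
      ring
    · have hdiv : j / i₀ = k := Nat.div_eq_of_lt_le h1 hlt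
      rw [Bfun, if_neg hle, hdiv]

lemma Bfun_zero : Bfun i₀ φ 0 = 0 := by
  rw [Bfun, if_pos (by omega)]; norm_num

lemma Bfun_nonneg (j : ℕ) : 0 ≤ Bfun i₀ φ j := by
  have hC := CCf_pos (s := s) hs hs1 hi₀ hφ0 hφ1
  have ha := aC_pos (s := s) hs hs1 hi₀ hφ0 hφ1
  have hiR : (0:ℝ) < (i₀:ℝ) := by exact_mod_cast (by omega : 0 < i₀)
  rw [Bfun]
  split_ifs with h
  · positivity
  · set k := j / i₀ with hk
    have hk1 : k * i₀ ≤ j := Nat.div_mul_le_self j i₀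
    have hk2 : j < (k + 1) * i₀ := by
      rw [hk, add_mul, one_mul]; exact Nat.lt_div_mul_add (by omega)
    have hc1 : ((k:ℝ)) * (i₀:ℝ) ≤ (j:ℝ) := by exact_mod_cast hk1
    have hc2 : (j:ℝ) < ((k:ℝ) + 1) * (i₀:ℝ) := by exact_mod_cast hk2
    have hbr : 0 ≤ ((k:ℝ) + 1) * (i₀:ℝ) - (j:ℝ) + ((j:ℝ) - (k:ℝ) * (i₀:ℝ)) * φ := by
      nlinarith
    have hp : (0:ℝ) ≤ φ ^ k := by positivity
    apply div_nonneg _ hiR.le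
    positivity

lemma Bfun_le (j : ℕ) : Bfun i₀ φ j ≤ CCf i₀ φ := by
  have hC := CCf_pos (s := s) hs hs1 hi₀ hφ0 hφ1
  have ha := aC_pos (s := s) hs hs1 hi₀ hφ0 hφ1
  have hiR : (0:ℝ) < (i₀:ℝ) := by exact_mod_cast (by omega : 0 < i₀)
  have hCa : CCf i₀ φ * φ = (i₀:ℝ) * aC φ := by
    rw [CCf, div_mul_cancel₀ _ (ne_of_gt hφ0)]
  rw [Bfun]
  split_ifs with h
  · -- j*a ≤ i₀*a = C*φ ≤ C
    have hjR : (j:ℝ) ≤ (i₀:ℝ) := by exact_mod_cast h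
    nlinarith
  · set k := j / i₀ with hk
    have hk1 : k * i₀ ≤ j := Nat.div_mul_le_self j i₀
    have hk2 : j < (k + 1) * i₀ := by
      rw [hk, add_mul, one_mul]; exact Nat.lt_div_mul_add (by omega)
    have hc1 : ((k:ℝ)) * (i₀:ℝ) ≤ (j:ℝ) := by exact_mod_cast hk1
    have hc2 : (j:ℝ) < ((k:ℝ) + 1) * (i₀:ℝ) := by exact_mod_cast hk2
    have hbr : ((k:ℝ) + 1) * (i₀:ℝ) - (j:ℝ) + ((j:ℝ) - (k:ℝ) * (i₀:ℝ)) * φ ≤ (i₀:ℝ) := by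
      nlinarith
    have hbr0 : 0 ≤ ((k:ℝ) + 1) * (i₀:ℝ) - (j:ℝ) + ((j:ℝ) - (k:ℝ) * (i₀:ℝ)) * φ := by
      nlinarith
    have hpk : φ ^ k ≤ 1 := pow_le_one₀ hφ0.le hφ1.le
    have hpk0 : (0:ℝ) < φ ^ k := by positivity
    rw [div_le_iff₀ hiR]
    calc CCf i₀ φ * φ ^ k * (((k:ℝ) + 1) * (i₀:ℝ) - (j:ℝ) + ((j:ℝ) - (k:ℝ) * (i₀:ℝ)) * φ)
        ≤ CCf i₀ φ * φ ^ k * (i₀:ℝ) := by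
          apply mul_le_mul_of_nonneg_left hbr (by positivity)
      _ ≤ CCf i₀ φ * 1 * (i₀:ℝ) := by
          apply mul_le_mul_of_nonneg_right _ hiR.le
          exact mul_le_mul_of_nonneg_left hpk hC.le
      _ = CCf i₀ φ * (i₀:ℝ) := by ring

lemma ubarC_nonneg (j : ℕ) : 0 ≤ ubarC s i₀ φ j := by
  rw [ubarC]
  split_ifs with h
  · have := aC_pos (s := s) hs hs1 hi₀ hφ0 hφ1; linarith
  · exact div_nonneg (Bfun_nonneg hs hs1 hi₀ hφ0 hφ1 j) (cC_nonneg hs1.le j)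

lemma ubarC_le (j : ℕ) : ubarC s i₀ φ j ≤ aC φ / 2 + CCf i₀ φ / (1 - s) := by
  have hC := CCf_pos (s := s) hs hs1 hi₀ hφ0 hφ1
  have ha := aC_pos (s := s) hs hs1 hi₀ hφ0 hφ1
  rw [ubarC]
  split_ifs with h
  · have : 0 < CCf i₀ φ / (1-s) := div_pos hC (by linarith)
    linarith
  · have hB0 := Bfun_nonneg hs hs1 hi₀ hφ0 hφ1 j
    have hBle := Bfun_le hs hs1 hi₀ hφ0 hφ1 j
    have hcge : 1 - s ≤ cC s i₀ j := by
      rw [cC, if_neg h]; split_ifs <;> linarith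
    have hcpos : 0 < cC s i₀ j := cC_pos hs1 h
    have : Bfun i₀ φ j / cC s i₀ j ≤ CCf i₀ φ / (1 - s) := by
      apply div_le_div₀ hC.le hBle (by linarith) hcge
    linarith

end ubarfacts

section ubarrec
variable {s : ℝ} {i₀ : ℕ} {φ : ℝ} (hs : 0 < s) (hs1 : s < 1) (hi₀ : 2 ≤ i₀)
  (hφ0 : 0 < φ) (hφ1 : φ < 1)
include hs hs1 hi₀ hφ0 hφ1
set_option linter.unusedSectionVars false

lemma cC_mul_ubarC (j : ℕ) : cC s i₀ j * ubarC s i₀ φ j = Bfun i₀ φ j := by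
  rcases Nat.eq_zero_or_pos j with rfl | hj
  · rw [cC_zero, Bfun_zero hs hs1 hi₀ hφ0 hφ1, zero_mul]
  · rw [ubarC, if_neg (by omega), mul_div_cancel₀ _ (ne_of_gt (cC_pos hs1 (by omega)))]

lemma ubarC_zero_eq : ubarC s i₀ φ 0 = 1/2 * cC s i₀ 1 * ubarC s i₀ φ 1 := by
  have h1 : (1:ℕ) ≤ i₀ := by omega
  rw [ubarC, ubarC, if_pos rfl, if_neg one_ne_zero, cC_one hi₀, Bfun, if_pos h1]
  norm_num
  ring

lemma ubarC_rec (hroot : φ^2 = (2*((i₀:ℝ)/(1-s)+1-(i₀:ℝ)))*φ - 1) (j : ℕ) :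
    ubarC s i₀ φ (j+1) =
      (if j + 1 = i₀ then (1:ℝ) else 0) +
        (1/2 * cC s i₀ j * ubarC s i₀ φ j + 1/2 * cC s i₀ (j+2) * ubarC s i₀ φ (j+2)) := by
  have hiR : (0:ℝ) < (i₀:ℝ) := by exact_mod_cast (by omega : 0 < i₀)
  have hiR0 : (i₀:ℝ) ≠ 0 := ne_of_gt hiR
  have h2φ : (2:ℝ) - φ ≠ 0 := by linarith
  have h1s : (1:ℝ) - s ≠ 0 := by linarith
  have ha2 : aC φ * (2 - φ) = 2 := by
    rw [aC, div_mul_cancel₀ _ h2φ]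
  have hCa : CCf i₀ φ * φ = (i₀:ℝ) * aC φ := by
    rw [CCf, div_mul_cancel₀ _ (ne_of_gt hφ0)]
  have erw : ∀ n : ℕ, 1/2 * cC s i₀ n * ubarC s i₀ φ n = 1/2 * Bfun i₀ φ n := by
    intro n; rw [mul_assoc, cC_mul_ubarC hs hs1 hi₀ hφ0 hφ1 n]
  rw [erw, erw]
  rcases Nat.lt_or_ge (j+1) i₀ with hlt | hge
  · -- case j+1 < i₀
    have hcJ : cC s i₀ (j+1) = 1 := by
      apply cC_eq_one (by omega)
      rintro ⟨hd, hne⟩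
      have := Nat.le_of_dvd (by omega) hd
      omega
    have hub : ubarC s i₀ φ (j+1) = Bfun i₀ φ (j+1) := by
      rw [ubarC, if_neg (by omega), hcJ, div_one]
    rw [hub, if_neg (by omega)]
    rw [Bfun, if_pos (by omega), Bfun, if_pos (by omega), Bfun, if_pos (by omega)]
    push_cast
    ring
  · rcases Nat.eq_or_lt_of_le hge with heq | hgt
    · -- case j+1 = i₀
      have hJi : j + 1 = i₀ := heq.symm
      have hcJ : cC s i₀ (j+1) = 1 := by rw [hJi]; exact cC_i₀ hi₀
      have hub : ubarC s i₀ φ (j+1) = Bfun i₀ φ (j+1) := by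
        rw [ubarC, if_neg (by omega), hcJ, div_one]
      rw [hub, if_pos hJi]
      have hjr : (j:ℝ) = (i₀:ℝ) - 1 := by
        have : ((j:ℕ):ℝ) + 1 = ((i₀:ℕ):ℝ) := by exact_mod_cast congrArg (Nat.cast : ℕ → ℝ) hJi
        linarith
      have hBJ : Bfun i₀ φ (j+1) = (i₀:ℝ) * aC φ := by
        rw [Bfun, if_pos (by omega)]
        push_cast
        rw [hjr]; ring
      have hBj : Bfun i₀ φ j = ((i₀:ℝ) - 1) * aC φ := by
        rw [Bfun, if_pos (by omega), hjr]
      have hBj2 : Bfun i₀ φ (j+2) = (i₀:ℝ) * aC φ * ((i₀:ℝ) - 1 + φ) / (i₀:ℝ) := by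
        have h1 : 1 * i₀ ≤ j + 2 := by omega
        have h2 : j + 2 ≤ (1 + 1) * i₀ := by omega
        rw [Bfun_overlap hs hs1 hi₀ hφ0 hφ1 le_rfl h1 h2, pow_one, ← hCa]
        push_cast
        rw [hjr]
        ring
      rw [hBJ, hBj, hBj2]
      have hred : (i₀:ℝ) * aC φ * ((i₀:ℝ) - 1 + φ) / (i₀:ℝ) = aC φ * ((i₀:ℝ) - 1 + φ) := by
        field_simp
      rw [hred]
      linear_combination (1/2 : ℝ) * ha2
    · -- j+1 > i₀
      have hipos : 0 < i₀ := by omega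
      obtain ⟨k, hk⟩ : ∃ k, j / i₀ + 1 = k := ⟨_, rfl⟩
      have hk1 : 1 ≤ k := hk ▸ Nat.le_add_left 1 (j / i₀)
      have hd1 := Nat.div_mul_le_self j i₀
      have hd2 : j < j / i₀ * i₀ + i₀ := Nat.lt_div_mul_add hipos
      -- facts : (k-1) i₀ ≤ j < k i₀, i.e.  k i₀ ≤ j + i₀ and j+1 ≤ k i₀
      have hexp : k * i₀ = j / i₀ * i₀ + i₀ := by rw [← hk]; ring
      have hja : j + 1 ≤ k * i₀ := by omega
      have hjb : k * i₀ ≤ j + i₀ := by omega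
      by_cases hbar : j + 1 = k * i₀
      · -- barrier case : j + 1 = k i₀ with k ≥ 2
        have hk2 : 2 ≤ k := by
          rcases Nat.lt_or_ge k 2 with h | h
          · interval_cases k <;> omega
          · exact h
        obtain ⟨l, hl⟩ : ∃ l, k = l + 1 := ⟨k - 1, by omega⟩
        have hl1 : 1 ≤ l := by omega
        have hexp2 : k * i₀ = l * i₀ + i₀ := by rw [hl]; ring
        have hexp3 : (l + 1) * i₀ = l * i₀ + i₀ := by ring
        have hexp4 : (k + 1) * i₀ = k * i₀ + i₀ := by ring
        have hne : j + 1 ≠ i₀ := by omega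
        have hcJ : cC s i₀ (j+1) = 1 - s := by
          apply cC_barrier (by omega)
          · rw [hbar]; exact dvd_mul_left i₀ k
          · exact hne
        have hub : ubarC s i₀ φ (j+1) = Bfun i₀ φ (j+1) / (1 - s) := by
          rw [ubarC, if_neg (by omega), hcJ]
        rw [hub, if_neg hne]
        have hcast : ((j:ℝ)) + 1 = (k:ℝ) * (i₀:ℝ) := by
          have := congrArg (Nat.cast : ℕ → ℝ) hbar
          push_cast at this
          linarith
        have hclk : (k:ℝ) = (l:ℝ) + 1 := by exact_mod_cast congrArg (Nat.cast : ℕ → ℝ) hl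
        have hBJ : Bfun i₀ φ (j+1) = CCf i₀ φ * φ^k := by
          rw [Bfun_overlap hs hs1 hi₀ hφ0 hφ1 hk1 (by omega) (by omega)]
          push_cast
          rw [hcast, div_eq_iff hiR0]
          ring
        have hBj : Bfun i₀ φ j = CCf i₀ φ * φ^l * (1 + ((i₀:ℝ) - 1) * φ) / (i₀:ℝ) := by
          rw [Bfun_overlap hs hs1 hi₀ hφ0 hφ1 hl1 (by omega) (by omega)]
          have hjrl : (j:ℝ) = ((l:ℝ) + 1) * (i₀:ℝ) - 1 := by
            rw [← hclk]; linarith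
          rw [hjrl]
          ring
        have hBj2 : Bfun i₀ φ (j+2) = CCf i₀ φ * φ^k * ((i₀:ℝ) - 1 + φ) / (i₀:ℝ) := by
          rw [Bfun_overlap hs hs1 hi₀ hφ0 hφ1 hk1 (j := j+2) (by omega) (by omega)]
          have : ((j:ℝ)) + 2 = (k:ℝ) * (i₀:ℝ) + 1 := by linarith
          push_cast
          rw [this]
          ring_nf
        rw [hBJ, hBj, hBj2]
        have hkl : φ^k = φ^l * φ := by rw [hl, pow_succ]
        rw [hkl]
        have key : (1 + 2*((i₀:ℝ)-1)*φ + φ^2)*(1-s) = 2*(i₀:ℝ)*φ := by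
          rw [hroot]
          field_simp
          ring
        have hstep : (0:ℝ) + (1/2 * (CCf i₀ φ * φ ^ l * (1 + ((i₀:ℝ) - 1) * φ) / (i₀:ℝ)) +
              1/2 * (CCf i₀ φ * (φ ^ l * φ) * ((i₀:ℝ) - 1 + φ) / (i₀:ℝ))) =
            (CCf i₀ φ * φ^l * (1 + 2*((i₀:ℝ)-1)*φ + φ^2)) / (2*(i₀:ℝ)) := by
          field_simp
          ring
        rw [hstep, div_eq_div_iff h1s (by positivity : (2:ℝ)*(i₀:ℝ) ≠ 0)]
        linear_combination (-(CCf i₀ φ * φ^l)) * key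
      · -- interior case : k-1 stretch,  (k-1) i₀ < ... use k' = j / i₀ ≥ 1
        obtain ⟨m, hm⟩ : ∃ m, j / i₀ = m := ⟨_, rfl⟩
        have hm1 : k = m + 1 := by rw [← hk, hm]
        have hmexp : (m+1) * i₀ = m * i₀ + i₀ := by ring
        have hmi : m * i₀ ≤ j := by rw [← hm]; exact hd1
        have hm1i : j + 1 < (m+1) * i₀ := by
          have h := lt_of_le_of_ne hja hbar
          rw [hm1] at h; exact h
        have hmge : 1 ≤ m := by
          rcases Nat.eq_or_lt_of_le (by omega : 0 ≤ m) with h0 | h1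
          · exfalso; rw [← h0] at hm1i; omega
          · omega
        have hcJ : cC s i₀ (j+1) = 1 := by
          apply cC_eq_one (by omega)
          rintro ⟨hd, hne2⟩
          obtain ⟨c, hc⟩ := hd
          have hdc : (j+1) / i₀ = c := by rw [hc, Nat.mul_div_cancel_left c hipos]
          have hdc2 : (j+1) / i₀ = m := by
            apply Nat.div_eq_of_lt_le
            · omega
            · exact hm1i
          have hcm : c = m := by omega
          subst hcm
          have : i₀ * c = c * i₀ := by ring
          omega
        have hub : ubarC s i₀ φ (j+1) = Bfun i₀ φ (j+1) := by
          rw [ubarC, if_neg (by omega), hcJ, div_one]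
        have hne : j + 1 ≠ i₀ := by omega
        rw [hub, if_neg hne]
        have o1 := Bfun_overlap (s := s) hs hs1 hi₀ hφ0 hφ1 hmge (j := j) (by omega) (by omega)
        have o2 := Bfun_overlap (s := s) hs hs1 hi₀ hφ0 hφ1 hmge (j := j+1) (by omega) (by omega)
        have o3 := Bfun_overlap (s := s) hs hs1 hi₀ hφ0 hφ1 hmge (j := j+2) (by omega) (by omega)
        rw [o1, o2, o3]
        push_cast
        ring

end ubarrec

section unique
variable {s : ℝ} {i₀ : ℕ} (hs : 0 < s) (hs1 : s < 1) (hi₀ : 2 ≤ i₀)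
include hs hs1 hi₀
set_option linter.unusedSectionVars false

lemma no_pos (f : ℕ → ℝ) (M : ℝ) (hbd : ∀ j, |f j| ≤ M)
    (h0 : f 0 = 1/2 * cC s i₀ 1 * f 1)
    (hrec : ∀ j : ℕ, f (j+1) = 1/2 * cC s i₀ j * f j + 1/2 * cC s i₀ (j+2) * f (j+2)) :
    ¬ (0 < cC s i₀ 1 * f 1) := by
  intro hpos
  set W : ℕ → ℝ := fun j => cC s i₀ j * f j with hW
  have hW0 : W 0 = 0 := by simp [hW, cC_zero]
  have hWrec : ∀ j : ℕ, W (j+2) = 2 * f (j+1) - W j := by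
    intro j
    have := hrec j
    simp only [hW]
    linarith [this]
  have hWb : ∀ j, |W j| ≤ M := by
    intro j
    have h1 := abs_le.mp (hbd j)
    have hc0 := cC_nonneg (s := s) (i₀ := i₀) hs1.le j
    have hc1 := cC_le_one (s := s) (i₀ := i₀) hs.le j
    rw [abs_le]
    constructor
    · simp only [hW]; nlinarith [abs_nonneg (f j)]
    · simp only [hW]; nlinarith [abs_nonneg (f j)]
  have hfW : ∀ j : ℕ, 0 ≤ W (j+1) → W (j+1) ≤ f (j+1) := by
    intro j hWj
    have hcpos : 0 < cC s i₀ (j+1) := cC_pos hs1 (by omega)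
    have hcle := cC_le_one (s := s) (i₀ := i₀) hs.le (j+1)
    have : W (j+1) = cC s i₀ (j+1) * f (j+1) := rfl
    nlinarith [this]
  have claim : ∀ n : ℕ, 0 ≤ W n ∧ W n + W 1 ≤ W (n+1) := by
    intro n
    induction n with
    | zero => exact ⟨le_of_eq hW0.symm, by rw [hW0]; linarith⟩
    | succ n ih =>
      obtain ⟨h1, h2⟩ := ih
      have hWn1 : 0 < W (n+1) := by
        calc (0:ℝ) < W 1 := hpos
          _ ≤ W n + W 1 := by linarith
          _ ≤ W (n+1) := h2
      refine ⟨hWn1.le, ?_⟩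
      have hf := hfW n hWn1.le
      have hr := hWrec n
      linarith
  have growth : ∀ n : ℕ, (n:ℝ) * W 1 ≤ W n := by
    intro n
    induction n with
    | zero => rw [hW0]; norm_num
    | succ n ih =>
      have := (claim n).2
      push_cast
      nlinarith
  have hW1e : W 1 = cC s i₀ 1 * f 1 := rfl
  obtain ⟨n, hn⟩ := exists_nat_gt (M / W 1)
  have hposW : 0 < W 1 := by rw [hW1e]; exact hpos
  have h1 : M < (n:ℝ) * W 1 := by
    rw [div_lt_iff₀ hposW] at hn
    linarith
  have h2 := growth n
  have h3 := (abs_le.mp (hWb n)).2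
  linarith

lemma unique_sol (f : ℕ → ℝ) (M : ℝ) (hbd : ∀ j, |f j| ≤ M)
    (h0 : f 0 = 1/2 * cC s i₀ 1 * f 1)
    (hrec : ∀ j : ℕ, f (j+1) = 1/2 * cC s i₀ j * f j + 1/2 * cC s i₀ (j+2) * f (j+2)) :
    ∀ j, f j = 0 := by
  have hp := no_pos hs hs1 hi₀ f M hbd h0 hrec
  have hm := no_pos hs hs1 hi₀ (fun j => -f j) M
    (fun j => by rw [abs_neg]; exact hbd j)
    (by linear_combination -h0)
    (fun j => by linear_combination -(hrec j))
  have hW1 : cC s i₀ 1 * f 1 = 0 := by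
    rcases lt_trichotomy (cC s i₀ 1 * f 1) 0 with h | h | h
    · exfalso; apply hm; rw [mul_neg] at *; linarith
    · exact h
    · exact absurd h hp
  have hc1 : cC s i₀ 1 = 1 := cC_one hi₀
  have hf1 : f 1 = 0 := by rw [hc1, one_mul] at hW1; exact hW1
  -- two-step induction to show cC j * f j = 0 for all j
  have hall : ∀ n : ℕ, cC s i₀ n * f n = 0 ∧ cC s i₀ (n+1) * f (n+1) = 0 := by
    intro n
    induction n with
    | zero => exact ⟨by rw [cC_zero]; ring, by rw [hc1, one_mul]; exact hf1⟩
    | succ n ih =>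
      obtain ⟨h1, h2⟩ := ih
      refine ⟨h2, ?_⟩
      have hr := hrec n
      have hfn1 : f (n+1) = 0 := by
        have hcpos : 0 < cC s i₀ (n+1) := cC_pos hs1 (by omega)
        rcases mul_eq_zero.mp h2 with h | h
        · exact absurd h (ne_of_gt hcpos)
        · exact h
      rw [hfn1] at hr
      have : cC s i₀ (n+2) * f (n+2) = -(cC s i₀ n * f n) := by linarith
      rw [this, h1, neg_zero]
  intro j
  match j with
  | 0 =>
    rw [h0, hc1, hf1]; ring
  | n + 1 =>
    have h2 := (hall n).2
    have hcpos : 0 < cC s i₀ (n+1) := cC_pos hs1 (by omega)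
    rcases mul_eq_zero.mp h2 with h | h
    · exact absurd h (ne_of_gt hcpos)
    · exact h

end unique

/-- Theorem 4 of the paper, player C, case `ω = 1` (i.e. `p = q = 1/2`):
absorption probabilities. -/
theorem theorem4_playerC_omega_eq_one (s : ℝ) (i₀ : ℕ)
    (hs : 0 < s) (hs1 : s < 1) (hi₀ : 2 ≤ i₀)
    (θ φ₂ : ℝ)
    (hθ : θ = 2 * ((i₀ : ℝ) / (1 - s) + 1 - (i₀ : ℝ)))
    (hφ₂ : φ₂ = (θ - Real.sqrt (θ ^ 2 - 4)) / 2) :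
    (∀ k : ℕ, Summable (fun m : ℕ => PC (1 / 2) s i₀ m (k * i₀))) ∧
    (∑' m : ℕ, PC (1 / 2) s i₀ m 0) = 1 / (2 - φ₂) ∧
    ∀ k : ℕ, 2 ≤ k →
      s * (∑' m : ℕ, PC (1 / 2) s i₀ m (k * i₀)) =
        2 * (i₀ : ℝ) * s * φ₂ ^ (k - 1) / ((1 - s) * (2 - φ₂)) := by
  have hiR : (0:ℝ) < (i₀:ℝ) := by exact_mod_cast (by omega : 0 < i₀)
  have h1s : (0:ℝ) < 1 - s := by linarith
  -- θ > 2
  have hθ2 : 2 < θ := by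
    have he : θ - 2 = 2*(i₀:ℝ)*s/(1-s) := by rw [hθ]; field_simp; ring
    have : 0 < 2*(i₀:ℝ)*s/(1-s) := by positivity
    linarith
  have hdisc : 0 < θ^2 - 4 := by nlinarith
  have hsqrt : Real.sqrt (θ^2-4) ^ 2 = θ^2 - 4 := Real.sq_sqrt hdisc.le
  have hsnn : 0 ≤ Real.sqrt (θ^2-4) := Real.sqrt_nonneg _
  have hφ0 : 0 < φ₂ := by
    rw [hφ₂]
    have : Real.sqrt (θ^2-4) < θ := by nlinarith
    linarith
  have hφ1 : φ₂ < 1 := by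
    by_contra h
    push_neg at h
    have hr : Real.sqrt (θ^2-4) ≤ θ - 2 := by rw [hφ₂] at h; linarith
    nlinarith
  have hroot : φ₂^2 = (2*((i₀:ℝ)/(1-s)+1-(i₀:ℝ)))*φ₂ - 1 := by
    rw [← hθ, hφ₂]
    linear_combination (1/4 : ℝ) * hsqrt
  have h2φ : (0:ℝ) < 2 - φ₂ := by linarith
  -- uniqueness : uC = ubarC
  set f : ℕ → ℝ := fun j => uC s i₀ j - ubarC s i₀ φ₂ j with hf
  have heq : ∀ j, uC s i₀ j = ubarC s i₀ φ₂ j := by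
    have hM : ∀ j, |f j| ≤ 1/((1-s) * epsC s i₀) + (aC φ₂/2 + CCf i₀ φ₂/(1-s)) := by
      intro j
      have h1 := uC_nonneg hs hs1 hi₀ j
      have h2 := uC_bound hs hs1 hi₀ j
      have h3 := ubarC_nonneg hs hs1 hi₀ hφ0 hφ1 j
      have h4 := ubarC_le hs hs1 hi₀ hφ0 hφ1 j
      rw [abs_le]
      constructor
      · simp only [hf]; linarith
      · simp only [hf]; linarith
    have h0 : f 0 = 1/2 * cC s i₀ 1 * f 1 := by
      simp only [hf]
      linear_combination uC_zero_eq hs hs1 hi₀ - ubarC_zero_eq hs hs1 hi₀ hφ0 hφ1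
    have hr : ∀ j : ℕ, f (j+1) = 1/2 * cC s i₀ j * f j + 1/2 * cC s i₀ (j+2) * f (j+2) := by
      intro j
      simp only [hf]
      linear_combination uC_rec hs hs1 hi₀ j - ubarC_rec hs hs1 hi₀ hφ0 hφ1 hroot j
    have := unique_sol hs hs1 hi₀ f _ hM h0 hr
    intro j
    have hj := this j
    simp only [hf] at hj
    linarith
  refine ⟨fun k => PC_summable hs hs1 hi₀ (k * i₀), ?_, ?_⟩
  · -- value at 0
    have h0 := heq 0
    rw [uC] at h0
    rw [h0, ubarC, if_pos rfl, aC]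
    rw [div_div, one_div]
    rw [mul_comm]
    rw [eq_comm, inv_eq_iff_eq_inv, inv_div]
    norm_num
  · -- barrier values
    intro k hk
    have hkk := heq (k * i₀)
    rw [uC] at hkk
    rw [hkk]
    have hne0 : k * i₀ ≠ 0 := by positivity
    have h2i : 2 * i₀ ≤ k * i₀ := Nat.mul_le_mul_right _ hk
    have hnei : k * i₀ ≠ i₀ := by omega
    have hcB : cC s i₀ (k * i₀) = 1 - s :=
      cC_barrier hne0 (dvd_mul_left i₀ k) hnei
    have hub : ubarC s i₀ φ₂ (k * i₀) = Bfun i₀ φ₂ (k * i₀) / (1 - s) := by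
      rw [ubarC, if_neg hne0, hcB]
    have hB : Bfun i₀ φ₂ (k * i₀) = CCf i₀ φ₂ * φ₂ ^ k := by
      rw [Bfun_overlap hs hs1 hi₀ hφ0 hφ1 (by omega : 1 ≤ k) le_rfl
        (Nat.mul_le_mul_right _ (by omega))]
      push_cast
      rw [div_eq_iff (ne_of_gt hiR)]
      ring
    rw [hub, hB]
    -- final algebra
    obtain ⟨l, hl⟩ : ∃ l, k = l + 1 := ⟨k - 1, by omega⟩
    have hk1 : k - 1 = l := by omega
    rw [hk1, hl, pow_succ, CCf, aC]
    field_simp
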